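/- Assume the direct estimator is design-unbiased, E[Y] = θ. Define for j = 1, 2 the adjusted score score_j = E[(X_j − Y)² | 𝒢] − v + 2c_j. Then E[score₁ − score₂] = E[(X₁ − θ)² − (X₂ − θ)²] + e, where the remainder is e = −2·Cov(b, d₁ − d₂); that is, the expected adjusted cross-validation score difference equals the oracle mean-squared-error difference of the two models plus a remainder given by minus twice the covariance between the conditional bias of the direct estimator and the difference of the conditional model biases. -/

import Mathlib

open MeasureTheory

lemma aux_integrable_sq {Ω : Type*} {F : MeasurableSpace Ω} {μ : Measure Ω}
    {f : Ω → ℝ} (hf : MemLp f 2 μ) : Integrable (fun ω => f ω ^ 2) μ :=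
  hf.integrable_sq

lemma aux_integrable_mul {Ω : Type*} {F : MeasurableSpace Ω} {μ : Measure Ω}
    {f g : Ω → ℝ} (hf : MemLp f 2 μ) (hg : MemLp g 2 μ) :
    Integrable (fun ω => f ω * g ω) μ := by
  have h := ((hf.add hg).integrable_sq.sub hf.integrable_sq).sub hg.integrable_sq
  have heq : (fun ω => f ω * g ω)
      = fun ω => (((fun ω => f ω + g ω) ω ^ 2 - f ω ^ 2) - g ω ^ 2) / 2 := by
    funext ω; simp; ring
  rw [heq]
  exact h.div_const 2

lemma aux_memℒp_two_condexp {Ω : Type*} {G F : MeasurableSpace Ω} {μ : Measure Ω}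
    [IsFiniteMeasure μ] (hG : G ≤ F)
    {f : Ω → ℝ} (hf : MemLp f 2 μ) : MemLp (μ[f|G]) 2 μ := by
  have hint : Integrable f μ := hf.integrable one_le_two
  have hgae : (condExpL2 ℝ ℝ hG (hf.toLp f) : Ω → ℝ) =ᵐ[μ] μ[f|G] := by
    refine ae_eq_condExp_of_forall_setIntegral_eq hG hint ?_ ?_ ?_
    · intro s hs hμs
      exact (integrable_condExpL2_of_isFiniteMeasure hG).integrableOn
    · intro s hs hμs
      rw [integral_condExpL2_eq hG (hf.toLp f) hs hμs.ne]
      exact setIntegral_congr_ae (hG s hs) ((hf.coeFn_toLp).mono fun x hx _ => hx)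
    · exact aestronglyMeasurable_condExpL2 hG _
  exact (Lp.memLp _).ae_eq hgae

/-- Assume the direct estimator is design-unbiased, `E[Y] = θ`.
With the adjusted scores `score_j = E[(X_j − Y)² | 𝒢] − v + 2c_j` for
`j = 1, 2`, the expected score difference satisfies
`E[score₁ − score₂] = E[(X₁ − θ)² − (X₂ − θ)²] + e` with remainder
`e = −2·Cov(b, d₁ − d₂)`, where `b = E[Y|𝒢] − θ`, `d_j = E[X_j|𝒢] − θ`,
`v = E[Y²|𝒢] − (E[Y|𝒢])²`, `c_j = E[X_j·Y|𝒢] − E[X_j|𝒢]·E[Y|𝒢]`, and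
`Cov(U, V) = E[U·V] − E[U]·E[V]`. -/
theorem expected_adjusted_score_difference
    {Ω : Type*} {F : MeasurableSpace Ω} {μ : Measure Ω} [IsProbabilityMeasure μ]
    {G : MeasurableSpace Ω} (hG : G ≤ F)
    (θ : ℝ) (Y X₁ X₂ : Ω → ℝ)
    (hY : MemLp Y 2 μ) (hX₁ : MemLp X₁ 2 μ) (hX₂ : MemLp X₂ 2 μ)
    (hunbiased : ∫ ω, Y ω ∂μ = θ) :
    ∫ ω, (((μ[(fun x => (X₁ x - Y x) ^ 2)|G]) ω
            - ((μ[(fun x => Y x ^ 2)|G]) ω - ((μ[Y|G]) ω) ^ 2)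
            + 2 * ((μ[(fun x => X₁ x * Y x)|G]) ω - (μ[X₁|G]) ω * (μ[Y|G]) ω))
          - ((μ[(fun x => (X₂ x - Y x) ^ 2)|G]) ω
            - ((μ[(fun x => Y x ^ 2)|G]) ω - ((μ[Y|G]) ω) ^ 2)
            + 2 * ((μ[(fun x => X₂ x * Y x)|G]) ω - (μ[X₂|G]) ω * (μ[Y|G]) ω))) ∂μ
      = (∫ ω, ((X₁ ω - θ) ^ 2 - (X₂ ω - θ) ^ 2) ∂μ)
        + (-2 * ((∫ ω, ((μ[Y|G]) ω - θ)
                    * (((μ[X₁|G]) ω - θ) - ((μ[X₂|G]) ω - θ)) ∂μ)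
            - (∫ ω, ((μ[Y|G]) ω - θ) ∂μ)
              * ∫ ω, (((μ[X₁|G]) ω - θ) - ((μ[X₂|G]) ω - θ)) ∂μ)) := by
  -- abbreviations
  set y := μ[Y|G] with hy
  set a₁ := μ[X₁|G] with ha₁
  set a₂ := μ[X₂|G] with ha₂
  set s₁ := μ[(fun x => (X₁ x - Y x) ^ 2)|G] with hs₁
  set s₂ := μ[(fun x => (X₂ x - Y x) ^ 2)|G] with hs₂
  set p₁ := μ[(fun x => X₁ x * Y x)|G] with hp₁
  set p₂ := μ[(fun x => X₂ x * Y x)|G] with hp₂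
  set q := μ[(fun x => Y x ^ 2)|G] with hq
  -- L² memberships of conditional expectations
  have hyL : MemLp y 2 μ := aux_memℒp_two_condexp hG hY
  have ha₁L : MemLp a₁ 2 μ := aux_memℒp_two_condexp hG hX₁
  have ha₂L : MemLp a₂ 2 μ := aux_memℒp_two_condexp hG hX₂
  -- integrability facts
  have hYi : Integrable Y μ := hY.integrable one_le_two
  have hX₁i : Integrable X₁ μ := hX₁.integrable one_le_two
  have hX₂i : Integrable X₂ μ := hX₂.integrable one_le_two
  have hX₁sq : Integrable (fun ω => X₁ ω ^ 2) μ := aux_integrable_sq hX₁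
  have hX₂sq : Integrable (fun ω => X₂ ω ^ 2) μ := aux_integrable_sq hX₂
  have hYsq : Integrable (fun ω => Y ω ^ 2) μ := aux_integrable_sq hY
  have hX₁Y : Integrable (fun ω => X₁ ω * Y ω) μ := aux_integrable_mul hX₁ hY
  have hX₂Y : Integrable (fun ω => X₂ ω * Y ω) μ := aux_integrable_mul hX₂ hY
  have hpy : Integrable (fun ω => (a₁ ω - a₂ ω) * y ω) μ :=
    aux_integrable_mul (ha₁L.sub ha₂L) hyL
  -- named real quantities
  set A₁ := ∫ ω, X₁ ω ∂μ
  set A₂ := ∫ ω, X₂ ω ∂μ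
  set B₁ := ∫ ω, X₁ ω ^ 2 ∂μ
  set B₂ := ∫ ω, X₂ ω ^ 2 ∂μ
  set C₁ := ∫ ω, X₁ ω * Y ω ∂μ
  set C₂ := ∫ ω, X₂ ω * Y ω ∂μ
  set D := ∫ ω, Y ω ^ 2 ∂μ
  set K := ∫ ω, (a₁ ω - a₂ ω) * y ω ∂μ
  -- integrals of conditional expectations
  have hIa₁ : ∫ ω, a₁ ω ∂μ = A₁ := integral_condExp hG
  have hIa₂ : ∫ ω, a₂ ω ∂μ = A₂ := integral_condExp hG
  have hIy : ∫ ω, y ω ∂μ = θ := by rw [hy, integral_condExp hG]; exact hunbiased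
  have hIp₁ : ∫ ω, p₁ ω ∂μ = C₁ := integral_condExp hG
  have hIp₂ : ∫ ω, p₂ ω ∂μ = C₂ := integral_condExp hG
  have hconst : ∀ c : ℝ, ∫ (_ : Ω), c ∂μ = c := by intro c; simp
  -- integrals of squared differences
  have hSD : ∀ (X : Ω → ℝ), MemLp X 2 μ →
      ∫ ω, (X ω - Y ω) ^ 2 ∂μ
        = (∫ ω, X ω ^ 2 ∂μ) - 2 * (∫ ω, X ω * Y ω ∂μ) + D := by
    intro X hX
    have h1 : Integrable (fun ω => X ω * Y ω) μ := aux_integrable_mul hX hY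
    have h2 : Integrable (fun ω => 2 * (X ω * Y ω)) μ := h1.const_mul 2
    have h3 : Integrable (fun ω => X ω ^ 2 - 2 * (X ω * Y ω)) μ :=
      (aux_integrable_sq hX).sub h2
    have heq : (fun ω => (X ω - Y ω) ^ 2)
        = fun ω => (X ω ^ 2 - 2 * (X ω * Y ω)) + Y ω ^ 2 := by
      funext ω; ring
    rw [heq, integral_add h3 hYsq, integral_sub (aux_integrable_sq hX) h2,
      integral_const_mul]
  have hIs₁ : ∫ ω, s₁ ω ∂μ = B₁ - 2 * C₁ + D := by
    rw [hs₁, integral_condExp hG]; exact hSD X₁ hX₁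
  have hIs₂ : ∫ ω, s₂ ω ∂μ = B₂ - 2 * C₂ + D := by
    rw [hs₂, integral_condExp hG]; exact hSD X₂ hX₂
  -- LHS computation
  have hLHS : ∫ ω, ((s₁ ω - (q ω - y ω ^ 2) + 2 * (p₁ ω - a₁ ω * y ω))
        - (s₂ ω - (q ω - y ω ^ 2) + 2 * (p₂ ω - a₂ ω * y ω))) ∂μ
      = (B₁ - 2 * C₁ + D) - (B₂ - 2 * C₂ + D) + 2 * (C₁ - C₂) - 2 * K := by
    have i1 : Integrable (fun ω => s₁ ω - s₂ ω) μ :=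
      integrable_condExp.sub integrable_condExp
    have i2 : Integrable (fun ω => p₁ ω - p₂ ω) μ :=
      integrable_condExp.sub integrable_condExp
    have i2' : Integrable (fun ω => 2 * (p₁ ω - p₂ ω)) μ := i2.const_mul 2
    have i3 : Integrable (fun ω => (s₁ ω - s₂ ω) + 2 * (p₁ ω - p₂ ω)) μ := i1.add i2'
    have i4 : Integrable (fun ω => 2 * ((a₁ ω - a₂ ω) * y ω)) μ := hpy.const_mul 2
    have heq : (fun ω => (s₁ ω - (q ω - y ω ^ 2) + 2 * (p₁ ω - a₁ ω * y ω))
          - (s₂ ω - (q ω - y ω ^ 2) + 2 * (p₂ ω - a₂ ω * y ω)))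
        = fun ω => ((s₁ ω - s₂ ω) + 2 * (p₁ ω - p₂ ω))
            - 2 * ((a₁ ω - a₂ ω) * y ω) := by
      funext ω; ring
    rw [heq, integral_sub i3 i4, integral_add i1 i2',
      integral_sub integrable_condExp integrable_condExp,
      integral_const_mul, integral_const_mul,
      integral_sub integrable_condExp integrable_condExp,
      hIs₁, hIs₂, hIp₁, hIp₂]
  -- RHS pieces
  have hsq : ∀ (X : Ω → ℝ), MemLp X 2 μ → Integrable X μ →
      ∫ ω, (X ω - θ) ^ 2 ∂μ
        = (∫ ω, X ω ^ 2 ∂μ) - 2 * θ * (∫ ω, X ω ∂μ) + θ ^ 2 := by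
    intro X hX hXi
    have h2 : Integrable (fun ω => 2 * θ * X ω) μ := hXi.const_mul (2 * θ)
    have h3 : Integrable (fun ω => X ω ^ 2 - 2 * θ * X ω) μ :=
      (aux_integrable_sq hX).sub h2
    have heq : (fun ω => (X ω - θ) ^ 2)
        = fun ω => (X ω ^ 2 - 2 * θ * X ω) + θ ^ 2 := by funext ω; ring
    rw [heq, integral_add h3 (integrable_const _),
      integral_sub (aux_integrable_sq hX) h2, integral_const_mul, hconst]
  have hRHS1 : ∫ ω, ((X₁ ω - θ) ^ 2 - (X₂ ω - θ) ^ 2) ∂μ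
      = (B₁ - 2 * θ * A₁ + θ ^ 2) - (B₂ - 2 * θ * A₂ + θ ^ 2) := by
    have j1 : Integrable (fun ω => (X₁ ω - θ) ^ 2) μ :=
      aux_integrable_sq (hX₁.sub (memLp_const θ))
    have j2 : Integrable (fun ω => (X₂ ω - θ) ^ 2) μ :=
      aux_integrable_sq (hX₂.sub (memLp_const θ))
    rw [integral_sub j1 j2, hsq X₁ hX₁ hX₁i, hsq X₂ hX₂ hX₂i]
  have hRHS2 : ∫ ω, (y ω - θ) ∂μ = 0 := by
    rw [integral_sub integrable_condExp (integrable_const θ), hIy, hconst, sub_self]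
  have hRHS3 : ∫ ω, (y ω - θ) * ((a₁ ω - θ) - (a₂ ω - θ)) ∂μ
      = K - θ * (A₁ - A₂) := by
    have k1 : Integrable (fun ω => a₁ ω - a₂ ω) μ :=
      integrable_condExp.sub integrable_condExp
    have k2 : Integrable (fun ω => θ * (a₁ ω - a₂ ω)) μ := k1.const_mul θ
    have heq : (fun ω => (y ω - θ) * ((a₁ ω - θ) - (a₂ ω - θ)))
        = fun ω => (a₁ ω - a₂ ω) * y ω - θ * (a₁ ω - a₂ ω) := by
      funext ω; ring
    rw [heq, integral_sub hpy k2, integral_const_mul,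
      integral_sub integrable_condExp integrable_condExp, hIa₁, hIa₂]
  rw [hLHS, hRHS1, hRHS2, hRHS3]
  ring
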